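/- The function h₁(t) = (log(1+t))^2 / log(1+t^2) is strictly increasing on the interval (1,∞). -/

import Mathlib

open Real Set

private lemma hasDerivAt_g (t : ℝ) (ht : 0 < t) :
    HasDerivAt (fun t : ℝ => (1 + t ^ 2) * Real.log (1 + t ^ 2) - (t + t ^ 2) * Real.log (1 + t))
      (2 * t * Real.log (1 + t ^ 2) + t - (1 + 2 * t) * Real.log (1 + t)) t := by
  have h1 : (0:ℝ) < 1 + t ^ 2 := by positivity
  have h2 : (0:ℝ) < 1 + t := by linarith
  have hq : HasDerivAt (fun t : ℝ => 1 + t ^ 2) (2 * t ^ 1) t :=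
    ((hasDerivAt_pow 2 t).const_add 1).congr_deriv (by norm_num)
  have hl2 : HasDerivAt (fun t : ℝ => Real.log (1 + t ^ 2)) (2 * t ^ 1 / (1 + t ^ 2)) t :=
    hq.log h1.ne'
  have hA : HasDerivAt (fun t : ℝ => (1 + t ^ 2) * Real.log (1 + t ^ 2))
      (2 * t ^ 1 * Real.log (1 + t ^ 2) + (1 + t ^ 2) * (2 * t ^ 1 / (1 + t ^ 2))) t :=
    hq.mul hl2
  have hp : HasDerivAt (fun t : ℝ => t + t ^ 2) (1 + 2 * t ^ 1) t :=
    (hasDerivAt_id t).add (hasDerivAt_pow 2 t)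
  have hl1 : HasDerivAt (fun t : ℝ => Real.log (1 + t)) (1 / (1 + t)) t :=
    ((hasDerivAt_id t).const_add 1).log h2.ne'
  have hB : HasDerivAt (fun t : ℝ => (t + t ^ 2) * Real.log (1 + t))
      ((1 + 2 * t ^ 1) * Real.log (1 + t) + (t + t ^ 2) * (1 / (1 + t))) t :=
    hp.mul hl1
  have : HasDerivAt (fun t : ℝ => (1 + t ^ 2) * Real.log (1 + t ^ 2) - (t + t ^ 2) * Real.log (1 + t)) _ t :=
    hA.sub hB
  convert this using 1
  field_simp
  ring

private lemma key_ineq {t : ℝ} (ht : 1 < t) :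
    (t + t ^ 2) * Real.log (1 + t) < (1 + t ^ 2) * Real.log (1 + t ^ 2) := by
  set g : ℝ → ℝ := fun t => (1 + t ^ 2) * Real.log (1 + t ^ 2) - (t + t ^ 2) * Real.log (1 + t)
    with hg
  have hmono : StrictMonoOn g (Ici 1) := by
    apply strictMonoOn_of_deriv_pos (convex_Ici 1)
    · intro x hx
      have hx0 : (0:ℝ) < x := lt_of_lt_of_le one_pos hx
      exact (hasDerivAt_g x hx0).differentiableAt.continuousAt.continuousWithinAt
    · intro x hx
      rw [interior_Ici] at hx
      have hx1 : (1:ℝ) < x := hx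
      have hx0 : (0:ℝ) < x := by linarith
      rw [(hasDerivAt_g x hx0).deriv]
      have hL1 : Real.log (1 + x) < x :=
        lt_of_lt_of_le (Real.log_lt_sub_one_of_pos (by linarith) (by linarith)) (by linarith)
      have hL1pos : 0 < Real.log (1 + x) := Real.log_pos (by linarith)
      have hle : Real.log (1 + x) ≤ Real.log (1 + x ^ 2) := by
        apply Real.log_le_log (by linarith)
        nlinarith
      nlinarith
  have h01 : g 1 = 0 := by simp [hg]
  have := hmono (self_mem_Ici) (le_of_lt (show (1:ℝ) < t from ht)) ht
  rw [h01] at this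
  simpa [hg, sub_pos] using this

theorem h1_strictMonoOn :
    StrictMonoOn (fun t : ℝ => (Real.log (1 + t)) ^ 2 / Real.log (1 + t ^ 2))
      (Set.Ioi 1) := by
  apply strictMonoOn_of_deriv_pos (convex_Ioi 1)
  · intro x hx
    have hx1 : (1:ℝ) < x := hx
    have h1 : (0:ℝ) < 1 + x := by linarith
    have h2 : (0:ℝ) < 1 + x ^ 2 := by positivity
    have hL2 : (0:ℝ) < Real.log (1 + x ^ 2) := Real.log_pos (by nlinarith)
    apply ContinuousAt.continuousWithinAt
    apply ContinuousAt.div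
    · exact (((continuous_const.add continuous_id).continuousAt).log h1.ne').pow 2
    · exact (((continuous_const.add (continuous_pow 2)).continuousAt).log h2.ne')
    · exact hL2.ne'
  · intro x hx
    rw [interior_Ioi] at hx
    have hx1 : (1:ℝ) < x := hx
    have h1 : (0:ℝ) < 1 + x := by linarith
    have h2 : (0:ℝ) < 1 + x ^ 2 := by positivity
    have hL2 : (0:ℝ) < Real.log (1 + x ^ 2) := Real.log_pos (by nlinarith)
    have hL1 : (0:ℝ) < Real.log (1 + x) := Real.log_pos (by linarith)
    have hl1 : HasDerivAt (fun t : ℝ => Real.log (1 + t)) (1 / (1 + x)) x :=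
      ((hasDerivAt_id x).const_add 1).log h1.ne'
    have hnum : HasDerivAt (fun t : ℝ => (Real.log (1 + t)) ^ 2)
        (2 * Real.log (1 + x) ^ 1 * (1 / (1 + x))) x := hl1.pow 2
    have hl2 : HasDerivAt (fun t : ℝ => Real.log (1 + t ^ 2)) (2 * x ^ 1 / (1 + x ^ 2)) x :=
      (((hasDerivAt_pow 2 x).const_add 1).congr_deriv (by norm_num)).log h2.ne'
    have hdiv : HasDerivAt (fun t : ℝ => (Real.log (1 + t)) ^ 2 / Real.log (1 + t ^ 2)) _ x :=
      hnum.div hl2 hL2.ne'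
    rw [hdiv.deriv]
    apply div_pos
    · have heq : 2 * Real.log (1 + x) ^ 1 * (1 / (1 + x)) * Real.log (1 + x ^ 2) -
          Real.log (1 + x) ^ 2 * (2 * x ^ 1 / (1 + x ^ 2)) =
          2 * Real.log (1 + x) *
            ((1 + x ^ 2) * Real.log (1 + x ^ 2) - (x + x ^ 2) * Real.log (1 + x)) /
            ((1 + x) * (1 + x ^ 2)) := by
        field_simp
      rw [heq]
      apply div_pos
      · have := key_ineq hx1
        nlinarith
      · positivity
    · positivity
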